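/- arXiv:2410.09506 — 2 statements merged into one kernel-verified Lean document; each statement's English description precedes it below -/
import Mathlib

section
/- For all real x ∈ [0, 1], (1/2 - e^{x/6}/(1 + e^{x/6}))² ≥ x²/579. -/
/-- For all x ∈ [0,1], (1/2 − e^{x/6}/(1+e^{x/6}))² ≥ x²/579. -/
theorem sigmoid_gap_sq_ge (x : ℝ) (h0 : 0 ≤ x) (h1 : x ≤ 1) :
    (1/2 - Real.exp (x/6) / (1 + Real.exp (x/6))) ^ 2 ≥ x ^ 2 / 579 := by
  set t := x/6 with ht
  have ht0 : 0 ≤ t := by positivity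
  have ht1 : t ≤ 1/6 := by simp [ht]; linarith
  have hcube : 1 + t + t^2/2 + t^3/6 ≤ Real.exp t := by
    have := Real.sum_le_exp_of_nonneg ht0 4
    simp [Finset.sum_range_succ, Nat.factorial] at this
    linarith
  have hEpos : (0:ℝ) < Real.exp t := Real.exp_pos t
  have h1E : (0:ℝ) < 1 + Real.exp t := by positivity
  set E := Real.exp t with hE
  set E0 : ℝ := 1 + t + t^2/2 + t^3/6 with hE0
  -- base polynomial inequality
  have hbase : 579*(E0-1)^2 - 144*t^2*(1+E0)^2 ≥ 0 := by
    have h16 : 0 ≤ 1/6 - t := by linarith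
    simp only [hE0]
    nlinarith [mul_nonneg h16 ht0, mul_nonneg (mul_nonneg h16 ht0) ht0,
      mul_nonneg (mul_nonneg (mul_nonneg h16 ht0) ht0) ht0,
      mul_nonneg (mul_nonneg (mul_nonneg (mul_nonneg h16 ht0) ht0) ht0) ht0,
      mul_nonneg (mul_nonneg (mul_nonneg (mul_nonneg (mul_nonneg h16 ht0) ht0) ht0) ht0) ht0,
      sq_nonneg t, sq_nonneg (t*t), sq_nonneg (t*t*t)]
  -- monotonicity step
  have hEE0 : E0 ≤ E := hcube
  have hslope : 579*(E + E0 - 2) - 144*t^2*(E + E0 + 2) ≥ 0 := by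
    have h36 : t^2 ≤ 1/36 := by nlinarith
    have hE01 : E0 - 1 ≥ t := by simp [hE0]; nlinarith
    nlinarith [mul_nonneg ht0 (le_of_lt hEpos), sq_nonneg t]
  have hmain : 579*(E-1)^2 - 144*t^2*(1+E)^2 ≥ 0 := by
    nlinarith [mul_nonneg (sub_nonneg.2 hEE0) hslope]
  have key : 1/2 - E/(1+E) = (1 - E)/(2*(1+E)) := by field_simp; ring
  rw [key, div_pow, ge_iff_le, div_le_div_iff₀ (by norm_num) (by positivity)]
  have hx6 : x = 6 * t := by rw [ht]; ring
  rw [hx6]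
  nlinarith [hmain]
end

section
/- The function g(x) = ln(x²) - 2 ln|1/2 - e^{x/6}/(1+e^{x/6})| is nondecreasing on (0, 1]. Consequently f(x) = x² / (1/2 - e^{x/6}/(1+e^{x/6}))² is nondecreasing on (0,1], and f(x) ≤ f(1) ≤ 579 for all x ∈ (0,1]. -/
open Real Set

private lemma dd_neg {x : ℝ} (hx : 0 < x) :
    1/2 - Real.exp (x/6) / (1 + Real.exp (x/6)) < 0 := by
  have he : 1 < Real.exp (x/6) := by
    rw [Real.one_lt_exp_iff]; linarith
  have hp : (0:ℝ) < 1 + Real.exp (x/6) := by positivity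
  rw [sub_neg, lt_div_iff₀ hp]; linarith

private lemma key_ineq {x : ℝ} (hx : 0 < x) :
    x * Real.exp (x/6) ≤ 3 * (Real.exp (x/6) ^ 2 - 1) := by
  have h := Real.self_lt_sinh_iff.mpr (by linarith : (0:ℝ) < x/6)
  rw [Real.sinh_eq] at h
  have he : (0:ℝ) < Real.exp (x/6) := Real.exp_pos _
  have hinv : Real.exp (-(x/6)) = 1 / Real.exp (x/6) := by
    rw [Real.exp_neg]; ring
  rw [hinv] at h
  have h2 : x/6 * Real.exp (x/6) < (Real.exp (x/6) - 1/Real.exp (x/6))/2 * Real.exp (x/6) := by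
    exact mul_lt_mul_of_pos_right h he
  have h3 : (1/Real.exp (x/6)) * Real.exp (x/6) = 1 := by field_simp
  nlinarith [h2, h3]

private lemma hasDeriv {x : ℝ} (hx : 0 < x) :
    HasDerivAt (fun x : ℝ => x ^ 2 / (1/2 - Real.exp (x/6) / (1 + Real.exp (x/6))) ^ 2)
      ((2*x * (1/2 - Real.exp (x/6) / (1 + Real.exp (x/6))) ^ 2
        - x ^ 2 * (2 * (1/2 - Real.exp (x/6) / (1 + Real.exp (x/6)))
            * (-(Real.exp (x/6) / 6 * (1 + Real.exp (x/6)) - Real.exp (x/6) * (Real.exp (x/6)/6))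
              / (1 + Real.exp (x/6)) ^ 2)))
        / ((1/2 - Real.exp (x/6) / (1 + Real.exp (x/6))) ^ 2) ^ 2) x := by
  have hp : (0:ℝ) < 1 + Real.exp (x/6) := by positivity
  have hexp : HasDerivAt (fun x : ℝ => Real.exp (x/6)) (Real.exp (x/6)/6) x := by
    have := (Real.hasDerivAt_exp (x/6)).comp x ((hasDerivAt_id x).div_const 6)
    simpa [div_eq_mul_inv, mul_comm, Function.comp_def] using this
  have hone : HasDerivAt (fun x : ℝ => 1 + Real.exp (x/6)) (Real.exp (x/6)/6) x := by
    exact hexp.const_add 1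
  have hratio : HasDerivAt (fun x : ℝ => Real.exp (x/6) / (1 + Real.exp (x/6)))
      ((Real.exp (x/6)/6 * (1 + Real.exp (x/6)) - Real.exp (x/6) * (Real.exp (x/6)/6))
        / (1 + Real.exp (x/6)) ^ 2) x :=
    hexp.div hone (ne_of_gt hp)
  have hd : HasDerivAt (fun x : ℝ => 1/2 - Real.exp (x/6) / (1 + Real.exp (x/6)))
      (-((Real.exp (x/6)/6 * (1 + Real.exp (x/6)) - Real.exp (x/6) * (Real.exp (x/6)/6))
        / (1 + Real.exp (x/6)) ^ 2)) x := by
    exact hratio.const_sub (1/2)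
  have hd2 : HasDerivAt (fun x : ℝ => (1/2 - Real.exp (x/6) / (1 + Real.exp (x/6))) ^ 2)
      (2 * (1/2 - Real.exp (x/6) / (1 + Real.exp (x/6)))
        * (-((Real.exp (x/6)/6 * (1 + Real.exp (x/6)) - Real.exp (x/6) * (Real.exp (x/6)/6))
          / (1 + Real.exp (x/6)) ^ 2))) x := by
    have := hd.pow 2
    exact this.congr_deriv (by simp only [Nat.cast_ofNat, Nat.reduceSub, pow_one])
  have hx2 : HasDerivAt (fun x : ℝ => x ^ 2) (2*x) x := by
    simpa using hasDerivAt_pow 2 x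
  have hdne : (1/2 - Real.exp (x/6) / (1 + Real.exp (x/6))) ^ 2 ≠ 0 :=
    pow_ne_zero _ (ne_of_lt (dd_neg hx))
  have := hx2.div hd2 hdne
  exact this.congr_deriv (by ring)

private lemma f_mono : MonotoneOn (fun x : ℝ =>
    x ^ 2 / (1/2 - Real.exp (x/6) / (1 + Real.exp (x/6))) ^ 2) (Set.Ioc 0 1) := by
  have hderiv : ∀ x ∈ interior (Set.Ioc (0:ℝ) 1),
      0 ≤ deriv (fun x : ℝ => x ^ 2 / (1/2 - Real.exp (x/6) / (1 + Real.exp (x/6))) ^ 2) x := by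
    intro x hx
    rw [interior_Ioc] at hx
    have hx0 : 0 < x := hx.1
    rw [(hasDeriv hx0).deriv]
    set e := Real.exp (x/6) with he
    have hep : 0 < e := Real.exp_pos _
    have hp : (0:ℝ) < 1 + e := by positivity
    have hdneg : 1/2 - e/(1+e) < 0 := dd_neg hx0
    have hkey : x * e ≤ 3 * (e^2 - 1) := key_ineq hx0
    set d : ℝ := 1/2 - e/(1+e) with hdd
    have hd' : -(e/6 * (1+e) - e * (e/6)) / (1+e)^2 = -(e/(6*(1+e)^2)) := by
      field_simp; ring
    rw [hd']
    apply div_nonneg _ (by positivity)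
    have h6 : d * (6*(1+e)^2) = 3*(1 - e^2) := by rw [hdd]; field_simp; ring
    have hq : d + x*e/(6*(1+e)^2) ≤ 0 := by
      have heq : d + x*e/(6*(1+e)^2) = (d*(6*(1+e)^2) + x*e)/(6*(1+e)^2) := by
        field_simp
      rw [heq, h6]
      apply div_nonpos_of_nonpos_of_nonneg _ (by positivity)
      linarith
    have hprod : 0 ≤ (2*x*d) * (d + x*e/(6*(1+e)^2)) := by
      have h1 : 2*x*d ≤ 0 := by nlinarith
      exact mul_nonneg_of_nonpos_of_nonpos h1 hq
    calc (0:ℝ) ≤ (2*x*d) * (d + x*e/(6*(1+e)^2)) := hprod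
      _ = 2*x * d^2 - x^2 * (2*d * (-(e/(6*(1+e)^2)))) := by ring
  apply monotoneOn_of_deriv_nonneg (convex_Ioc 0 1) _ _ hderiv
  · intro x hx
    exact ((hasDeriv hx.1).continuousAt).continuousWithinAt
  · intro x hx
    rw [interior_Ioc] at hx
    exact ((hasDeriv hx.1).differentiableAt).differentiableWithinAt

/-- g(x) = ln(x²) − 2 ln|1/2 − e^{x/6}/(1+e^{x/6})| is nondecreasing on (0,1]; consequently
f(x) = x²/(1/2 − e^{x/6}/(1+e^{x/6}))² is nondecreasing on (0,1] and f(x) ≤ f(1) ≤ 579. -/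
theorem sigmoid_ratio_monotone :
    MonotoneOn (fun x : ℝ =>
        Real.log (x ^ 2) - 2 * Real.log |1/2 - Real.exp (x/6) / (1 + Real.exp (x/6))|)
      (Set.Ioc 0 1) ∧
    MonotoneOn (fun x : ℝ =>
        x ^ 2 / (1/2 - Real.exp (x/6) / (1 + Real.exp (x/6))) ^ 2)
      (Set.Ioc 0 1) ∧
    (∀ x ∈ Set.Ioc (0:ℝ) 1,
        x ^ 2 / (1/2 - Real.exp (x/6) / (1 + Real.exp (x/6))) ^ 2
          ≤ (1:ℝ) ^ 2 / (1/2 - Real.exp (1/6) / (1 + Real.exp (1/6))) ^ 2) ∧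
    (1:ℝ) ^ 2 / (1/2 - Real.exp (1/6) / (1 + Real.exp (1/6))) ^ 2 ≤ 579 := by
  have hf := f_mono
  have hfx : ∀ x ∈ Set.Ioc (0:ℝ) 1,
      0 < x ^ 2 / (1/2 - Real.exp (x/6)/(1+Real.exp (x/6)))^2 := by
    intro x hx
    have hd := (dd_neg hx.1).ne
    have hx0 := hx.1.ne'
    positivity
  refine ⟨?_, hf, ?_, ?_⟩
  · intro x hx y hy hxy
    have hgx : ∀ z ∈ Set.Ioc (0:ℝ) 1,
        Real.log (z^2) - 2*Real.log |1/2 - Real.exp (z/6)/(1+Real.exp (z/6))|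
          = Real.log (z^2/(1/2 - Real.exp (z/6)/(1+Real.exp (z/6)))^2) := by
      intro z hz
      have hd := (dd_neg hz.1).ne
      have hz0 := hz.1.ne'
      rw [Real.log_div (by positivity) (pow_ne_zero _ hd)]
      congr 1
      rw [← sq_abs, Real.log_pow]
      norm_num
    simp only
    rw [hgx x hx, hgx y hy]
    exact Real.log_le_log (hfx x hx) (hf hx hy hxy)
  · intro x hx
    exact hf hx (by norm_num : (1:ℝ) ∈ Set.Ioc (0:ℝ) 1) hx.2
  · set e := Real.exp (1/6) with he
    have he6 : e^6 = Real.exp 1 := by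
      rw [he, ← Real.exp_nat_mul]; norm_num
    have hce : (1.18131:ℝ) < e := by
      by_contra hc
      push_neg at hc
      have h1 : e^6 ≤ (1.18131:ℝ)^6 := pow_le_pow_left₀ (Real.exp_pos _).le hc 6
      rw [he6] at h1
      have := Real.exp_one_gt_d9
      norm_num at h1 this
      linarith
    have hp : (0:ℝ) < 1 + e := by positivity
    have hd : 1/2 - e/(1+e) = (1-e)/(2*(1+e)) := by field_simp; ring
    rw [hd, one_pow]
    have h0 : 0 < ((1-e)/(2*(1+e)))^2 := by
      apply pow_two_pos_of_ne_zero
      apply div_ne_zero (by linarith) (by positivity)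
    rw [div_le_iff₀ h0]
    have heq : ((1-e)/(2*(1+e)))^2 * (4*(1+e)^2) = (1-e)^2 := by
      have h2 : (2*(1+e))^2 = 4*(1+e)^2 := by ring
      rw [div_pow, h2, div_mul_cancel₀ _ (by positivity : (4*(1+e)^2) ≠ 0)]
    nlinarith [heq, hce, hp]
end
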